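/- Let X_t be an irreducible continuous-time Markov chain on a finite set V with stationary measure π. Fix V_0 ⊂ W ⊂ V, g : V_0 → ℝ, and let f and f_W be the solutions of the Poisson equations Lf = 0 on V∖V_0, f = g on V_0, and L_W f_W = 0 on W∖V_0, f_W = g on V_0, where L_W is the generator of the trace process on W. Then the Dirichlet forms satisfy D(f) = π(W) ⟨f_W, (−L_W) f_W⟩_{π_W}, where π_W(x) = π(x)/π(W) for x ∈ W is the conditioned stationary measure. -/

import Mathlib

open Finset Filter Topology

noncomputable section

/-- Generator of a continuous-time Markov chain with jump rates `R`. -/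
def gen {V : Type*} [Fintype V] (R : V → V → ℝ) (f : V → ℝ) (x : V) : ℝ :=
  ∑ y, R x y * (f y - f x)

/-- Generator of a chain restricted to the subset `W` (e.g. a trace process). -/
def genOn {V : Type*} [Fintype V] [DecidableEq V] (W : Finset V) (R : V → V → ℝ)
    (f : V → ℝ) (x : V) : ℝ :=
  ∑ y ∈ W, R x y * (f y - f x)

/-- Detailed balance (reversibility) of `π` for the rates `R`. -/
def Reversible {V : Type*} (R : V → V → ℝ) (π : V → ℝ) : Prop :=
  ∀ x y, π x * R x y = π y * R y x

/-- Stationarity of `π` for the rates `R`. -/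
def Stationary {V : Type*} [Fintype V] (R : V → V → ℝ) (π : V → ℝ) : Prop :=
  ∀ y, ∑ x, π x * R x y = π y * ∑ z, R y z

/-- Irreducibility of the rates `R`. -/
def Irred {V : Type*} (R : V → V → ℝ) : Prop :=
  ∀ x y : V, Relation.ReflTransGen (fun a b => 0 < R a b) x y

/-- `h` is the equilibrium potential `h(x) = P_x[H_A < H_B]` : it equals `1` on `A`,
`0` on `B` and is harmonic elsewhere. -/
def IsEqPotential {V : Type*} [Fintype V] (R : V → V → ℝ) (A B : Finset V)
    (h : V → ℝ) : Prop :=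
  (∀ x ∈ A, h x = 1) ∧ (∀ x ∈ B, h x = 0) ∧ ∀ x, x ∉ A → x ∉ B → gen R h x = 0

/-- The capacity `Cap(A,B) = ∑_{x∈A} π(x) λ(x) P_x[H_B < H_A⁺]`, expressed through the
equilibrium potential `h = h_{A,B}` as `-∑_{x∈A} π(x) (L h)(x)`. -/
def capFor {V : Type*} [Fintype V] (R : V → V → ℝ) (π : V → ℝ) (A : Finset V)
    (h : V → ℝ) : ℝ :=
  ∑ x ∈ A, π x * (-(gen R h x))

lemma gen_sub' {V : Type*} [Fintype V] (R : V → V → ℝ) (u v : V → ℝ) (x : V) :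
    gen R (fun z => u z - v z) x = gen R u x - gen R v x := by
  simp only [gen, ← Finset.sum_sub_distrib]
  exact Finset.sum_congr rfl fun y _ => by ring

lemma gen_neg' {V : Type*} [Fintype V] (R : V → V → ℝ) (u : V → ℝ) (x : V) :
    gen R (fun z => -u z) x = -gen R u x := by
  simp only [gen, ← Finset.sum_neg_distrib]
  exact Finset.sum_congr rfl fun y _ => by ring

lemma gen_mul_const' {V : Type*} [Fintype V] (R : V → V → ℝ) (u : V → ℝ) (c : ℝ) (x : V) :
    gen R (fun z => u z * c) x = gen R u x * c := by
  simp only [gen, Finset.sum_mul]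
  exact Finset.sum_congr rfl fun y _ => by ring

lemma gen_sum' {V : Type*} {ι : Type*} [Fintype V] (R : V → V → ℝ) (s : Finset ι)
    (F : ι → V → ℝ) (x : V) :
    gen R (fun z => ∑ i ∈ s, F i z) x = ∑ i ∈ s, gen R (F i) x := by
  simp only [gen, ← Finset.sum_sub_distrib, Finset.mul_sum]
  exact Finset.sum_comm

lemma genOn_sub' {V : Type*} [Fintype V] [DecidableEq V] (W : Finset V) (R : V → V → ℝ)
    (u v : V → ℝ) (x : V) :
    genOn W R (fun z => u z - v z) x = genOn W R u x - genOn W R v x := by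
  simp only [genOn, ← Finset.sum_sub_distrib]
  exact Finset.sum_congr rfl fun y _ => by ring

lemma max_on_W' {V : Type*} [Fintype V] (R : V → V → ℝ)
    (hR : ∀ x y, 0 ≤ R x y) (hirr : Irred R) (W : Finset V) (hWne : W.Nonempty)
    (u : V → ℝ) (hu : ∀ x, x ∉ W → gen R u x = 0) :
    ∃ w ∈ W, ∀ x, u x ≤ u w := by
  obtain ⟨w₀, hw₀⟩ := hWne
  obtain ⟨z, -, hz⟩ := Finset.exists_max_image Finset.univ u ⟨w₀, Finset.mem_univ _⟩
  have key : ∀ a, Relation.ReflTransGen (fun p q => 0 < R p q) a w₀ →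
      u a = u z → ∃ w ∈ W, u w = u z := by
    intro a h
    induction h using Relation.ReflTransGen.head_induction_on with
    | refl => exact fun h' => ⟨w₀, hw₀, h'⟩
    | head h' hpath ih =>
      rename_i a c
      intro ha
      by_cases haW : a ∈ W
      · exact ⟨a, haW, ha⟩
      · have h0 := hu a haW
        have hterms : ∀ y ∈ Finset.univ, R a y * (u y - u a) ≤ 0 := fun y _ =>
          mul_nonpos_of_nonneg_of_nonpos (hR a y)
            (by have := ha ▸ hz y (Finset.mem_univ y); linarith [hz y (Finset.mem_univ y), ha.symm ▸ le_refl (u a)])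
        have hall := (Finset.sum_eq_zero_iff_of_nonpos hterms).mp h0
        have hc := hall c (Finset.mem_univ c)
        have : u c = u a := by
          rcases mul_eq_zero.mp hc with h | h
          · exact absurd h (ne_of_gt h')
          · linarith [sub_eq_zero.mp h]
        exact ih (this.trans ha)
  obtain ⟨w, hwW, hw⟩ := key z (hirr z w₀) rfl
  exact ⟨w, hwW, fun x => hw ▸ hz x (Finset.mem_univ x)⟩

lemma harm_unique' {V : Type*} [Fintype V] (R : V → V → ℝ)
    (hR : ∀ x y, 0 ≤ R x y) (hirr : Irred R) (W : Finset V) (hWne : W.Nonempty)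
    (u v : V → ℝ) (hu : ∀ x, x ∉ W → gen R u x = 0) (hv : ∀ x, x ∉ W → gen R v x = 0)
    (heq : ∀ x ∈ W, u x = v x) : ∀ x, u x = v x := by
  have hd : ∀ x, x ∉ W → gen R (fun z => u z - v z) x = 0 := fun x hx => by
    rw [gen_sub', hu x hx, hv x hx, sub_zero]
  have hd' : ∀ x, x ∉ W → gen R (fun z => -(u z - v z)) x = 0 := fun x hx => by
    rw [gen_neg' R (fun z => u z - v z), hd x hx, neg_zero]
  obtain ⟨w1, hw1, h1⟩ := max_on_W' R hR hirr W hWne (fun z => u z - v z) hd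
  obtain ⟨w2, hw2, h2⟩ := max_on_W' R hR hirr W hWne (fun z => -(u z - v z)) hd'
  intro x
  have e1 : u w1 - v w1 = 0 := by rw [heq w1 hw1]; ring
  have e2 : u w2 - v w2 = 0 := by rw [heq w2 hw2]; ring
  have := h1 x; have := h2 x
  simp only [e1, e2, neg_zero] at *
  linarith [h1 x, h2 x]

/-- with `f` the harmonic extension of `g : V₀ → ℝ` to `V` and `f_W` its
harmonic extension within `W` relative to the trace chain (whose jump rates
`R_W(x,y) = R(x,y) + ∑_{z∉W} R(x,z) P_z[X_{H_W}=y]` are expressed via the harmonic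
measure `hm`), the Dirichlet forms satisfy
`D(f) = π(W) ⟨f_W, (−L_W) f_W⟩_{π_W}` where `π_W = π(·)/π(W)`. -/
theorem stmt4 {V : Type*} [Fintype V] [DecidableEq V]
    (R : V → V → ℝ) (π : V → ℝ)
    (hR : ∀ x y, 0 ≤ R x y) (hRdiag : ∀ x, R x x = 0)
    (hπ : ∀ x, 0 < π x) (hstat : Stationary R π) (hirr : Irred R)
    (W : Finset V) (hWne : W.Nonempty)
    (V₀ : Finset V) (hV₀W : V₀ ⊆ W) (hV₀ne : V₀.Nonempty)
    (hm : V → V → ℝ)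
    (hm0 : ∀ x ∈ W, ∀ y, hm x y = if x = y then 1 else 0)
    (hmh : ∀ x, x ∉ W → ∀ y, gen R (fun z => hm z y) x = 0)
    (RW : V → V → ℝ)
    (hRW : ∀ x ∈ W, ∀ y ∈ W, x ≠ y → RW x y = R x y + ∑ z ∈ Wᶜ, R x z * hm z y)
    (hRWdiag : ∀ x, RW x x = 0)
    (g f fW : V → ℝ)
    (hf0 : ∀ x ∈ V₀, f x = g x)
    (hfh : ∀ x, x ∉ V₀ → gen R f x = 0)
    (hfW0 : ∀ x ∈ V₀, fW x = g x)
    (hfWh : ∀ x ∈ W, x ∉ V₀ → genOn W RW fW x = 0) :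
    ∑ x, π x * (f x * (-(gen R f x)))
      = (∑ x ∈ W, π x) *
          ∑ x ∈ W, (π x / ∑ z ∈ W, π z) * (fW x * (-(genOn W RW fW x))) := by
  classical
  -- hm is nonnegative
  have hmnn : ∀ z y, 0 ≤ hm z y := by
    intro z y
    obtain ⟨w, hwW, hw⟩ := max_on_W' R hR hirr W hWne (fun v => -(hm v y))
      (fun x hx => by rw [gen_neg' R (fun v => hm v y), hmh x hx y, neg_zero])
    have h1 := hw z
    have h2 : hm w y = if w = y then 1 else 0 := hm0 w hwW y
    have h3 : 0 ≤ hm w y := by rw [h2]; split <;> norm_num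
    simp only [neg_le_neg_iff] at h1
    linarith
  -- total harmonic measure is 1
  have hmsum : ∀ v, (∑ y ∈ W, hm v y) = 1 := by
    have := harm_unique' R hR hirr W hWne (fun v => ∑ y ∈ W, hm v y) (fun _ => 1)
      (fun x hx => by
        have h1 : gen R (fun v => ∑ y ∈ W, hm v y) x
            = ∑ y ∈ W, gen R (fun z => hm z y) x := gen_sum' R W (fun y z => hm z y) x
        rw [h1]
        exact Finset.sum_eq_zero fun y _ => hmh x hx y)
      (fun x _ => by simp [gen])
      (fun x hx => by
        simp only [hm0 x hx]
        rw [Finset.sum_ite_eq W x (fun _ => (1:ℝ)), if_pos hx])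
    exact this
  -- harmonic extension of f via hm
  have hmf : ∀ v, f v = ∑ y ∈ W, hm v y * f y := by
    have := harm_unique' R hR hirr W hWne f (fun v => ∑ y ∈ W, hm v y * f y)
      (fun x hx => hfh x (fun hc => hx (hV₀W hc)))
      (fun x hx => by
        have h1 : gen R (fun v => ∑ y ∈ W, hm v y * f y) x
            = ∑ y ∈ W, gen R (fun z => hm z y * f y) x :=
          gen_sum' R W (fun y z => hm z y * f y) x
        rw [h1]
        refine Finset.sum_eq_zero fun y _ => ?_
        rw [gen_mul_const' R (fun z => hm z y) (f y) x, hmh x hx y, zero_mul])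
      (fun x hx => by
        simp only [hm0 x hx, ite_mul, one_mul, zero_mul]
        rw [Finset.sum_ite_eq W x (fun y => f y), if_pos hx])
    exact this
  -- trace generator equals generator for the harmonic extension f, on W
  have F4 : ∀ x ∈ W, genOn W RW f x = gen R f x := by
    intro x hx
    have step1 : genOn W RW f x
        = (∑ y ∈ W, R x y * (f y - f x))
          + ∑ y ∈ W, ∑ z ∈ Wᶜ, R x z * hm z y * (f y - f x) := by
      rw [genOn, ← Finset.sum_add_distrib]
      refine Finset.sum_congr rfl fun y hy => ?_
      by_cases hxy : x = y
      · subst hxy; simp [hRWdiag]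
      · rw [hRW x hx y hy hxy, add_mul, Finset.sum_mul]
    have step2 : (∑ y ∈ W, ∑ z ∈ Wᶜ, R x z * hm z y * (f y - f x))
        = ∑ z ∈ Wᶜ, R x z * (f z - f x) := by
      rw [Finset.sum_comm]
      refine Finset.sum_congr rfl fun z _ => ?_
      have e1 : (∑ y ∈ W, R x z * hm z y * (f y - f x))
          = R x z * ∑ y ∈ W, (hm z y * f y - hm z y * f x) := by
        rw [Finset.mul_sum]
        exact Finset.sum_congr rfl fun y _ => by ring
      rw [e1, Finset.sum_sub_distrib, ← Finset.sum_mul, hmsum z, one_mul, ← hmf z]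
    rw [step1, step2, gen, ← Finset.sum_add_sum_compl W (fun v => R x v * (f v - f x))]
  -- firing-rate identities for the stationarity of the trace chain
  have hQ : ∀ x ∈ W, ∀ y ∈ W, x ≠ y → RW x y = ∑ v, R x v * hm v y := by
    intro x hx y hy hxy
    rw [hRW x hx y hy hxy, ← Finset.sum_add_sum_compl W (fun v => R x v * hm v y)]
    congr 1
    have e : ∀ v ∈ W, R x v * hm v y = if v = y then R x v else 0 := by
      intro v hv
      rw [hm0 v hv y]
      by_cases h : v = y <;> simp [h]
    rw [Finset.sum_congr rfl e, Finset.sum_ite_eq' W y (fun v => R x v), if_pos hy]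
  have hQ' : ∀ x ∈ W, ∀ y ∈ W, RW x y
      = (∑ v, R x v * hm v y) - (if x = y then ∑ v, R x v * hm v x else 0) := by
    intro x hx y hy
    by_cases hxy : x = y
    · subst hxy; simp [hRWdiag]
    · rw [hQ x hx y hy hxy, if_neg hxy, sub_zero]
  -- stationarity identity ∑ π L φ = 0
  have stat_zero : ∀ φ : V → ℝ, (∑ x, π x * gen R φ x) = 0 := by
    intro φ
    have e1 : (∑ x, π x * gen R φ x)
        = (∑ x, ∑ y, π x * R x y * φ y) - ∑ x, ∑ y, π x * R x y * φ x := by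
      rw [← Finset.sum_sub_distrib]
      refine Finset.sum_congr rfl fun x _ => ?_
      rw [gen, Finset.mul_sum, ← Finset.sum_sub_distrib]
      exact Finset.sum_congr rfl fun y _ => by ring
    have e2 : (∑ x, ∑ y, π x * R x y * φ y) = ∑ x, ∑ y, π x * R x y * φ x := by
      rw [Finset.sum_comm]
      refine Finset.sum_congr rfl fun y _ => ?_
      rw [← Finset.sum_mul, hstat y, Finset.mul_sum, Finset.sum_mul]
    rw [e1, e2, sub_self]
  -- partial balance: ∑_{x∈W} π x Q x y = π y λ y
  have hb : ∀ y ∈ W, (∑ x ∈ W, π x * ∑ v, R x v * hm v y) = π y * ∑ v, R y v := by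
    intro y hy
    have h1 : (∑ x ∈ W, π x * gen R (fun z => hm z y) x) = 0 := by
      rw [Finset.sum_subset (Finset.subset_univ W)
        (fun x _ hx => by rw [hmh x hx y, mul_zero])]
      exact stat_zero _
    have h2 : ∀ x ∈ W, π x * gen R (fun z => hm z y) x
        = π x * (∑ v, R x v * hm v y) - (if x = y then π y * ∑ v, R y v else 0) := by
      intro x hx
      have e : gen R (fun z => hm z y) x
          = (∑ v, R x v * hm v y) - (if x = y then 1 else 0) * ∑ v, R x v := by
        rw [gen, ← hm0 x hx y]
        have : ∀ v ∈ Finset.univ, R x v * (hm v y - hm x y)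
            = R x v * hm v y - hm x y * R x v := fun v _ => by ring
        rw [Finset.sum_congr rfl this, Finset.sum_sub_distrib, ← Finset.mul_sum]
      rw [e]
      by_cases hxy : x = y
      · subst hxy; rw [if_pos rfl, if_pos rfl]; ring
      · rw [if_neg hxy, if_neg hxy]; ring
    rw [Finset.sum_congr rfl h2, Finset.sum_sub_distrib,
      Finset.sum_ite_eq' W y (fun _ => π y * ∑ v, R y v), if_pos hy] at h1
    linarith
  -- stationarity of π for the trace chain on W
  have F5 : ∀ y ∈ W, (∑ x ∈ W, π x * RW x y) = π y * ∑ w ∈ W, RW y w := by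
    intro y hy
    have hL : (∑ x ∈ W, π x * RW x y)
        = (∑ x ∈ W, π x * ∑ v, R x v * hm v y) - π y * ∑ v, R y v * hm v y := by
      have e : ∀ x ∈ W, π x * RW x y
          = π x * (∑ v, R x v * hm v y)
            - (if x = y then π y * ∑ v, R y v * hm v y else 0) := by
        intro x hx
        rw [hQ' x hx y hy]
        by_cases hxy : x = y
        · subst hxy; rw [if_pos rfl, if_pos rfl]; ring
        · rw [if_neg hxy, if_neg hxy]; ring
      rw [Finset.sum_congr rfl e, Finset.sum_sub_distrib,
        Finset.sum_ite_eq' W y (fun _ => π y * ∑ v, R y v * hm v y), if_pos hy]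
    have hRside : (∑ w ∈ W, RW y w) = (∑ v, R y v) - ∑ v, R y v * hm v y := by
      have e : ∀ w ∈ W, RW y w
          = (∑ v, R y v * hm v w) - (if y = w then ∑ v, R y v * hm v y else 0) :=
        fun w hw => hQ' y hy w hw
      rw [Finset.sum_congr rfl e, Finset.sum_sub_distrib,
        Finset.sum_ite_eq W y (fun _ => ∑ v, R y v * hm v y), if_pos hy]
      congr 1
      rw [Finset.sum_comm]
      exact Finset.sum_congr rfl fun v _ => by rw [← Finset.mul_sum, hmsum v, mul_one]
    rw [hL, hb y hy, hRside]
    ring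
  -- nonnegativity of trace rates
  have F6 : ∀ x ∈ W, ∀ y ∈ W, 0 ≤ RW x y := by
    intro x hx y hy
    by_cases hxy : x = y
    · subst hxy; rw [hRWdiag]
    · rw [hRW x hx y hy hxy]
      have : 0 ≤ ∑ z ∈ Wᶜ, R x z * hm z y :=
        Finset.sum_nonneg fun z _ => mul_nonneg (hR x z) (hmnn z y)
      linarith [hR x y]
  -- the Dirichlet bilinear form on W
  set B : (V → ℝ) → (V → ℝ) → ℝ :=
    fun a b => ∑ x ∈ W, π x * (a x * (-(genOn W RW b x))) with hBdef
  have Bexp : ∀ a b : V → ℝ,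
      B a b = ∑ x ∈ W, ∑ y ∈ W, π x * RW x y * (a x * (b x - b y)) := by
    intro a b
    simp only [hBdef]
    refine Finset.sum_congr rfl fun x hx => ?_
    have e : -(genOn W RW b x) = ∑ y ∈ W, RW x y * (b x - b y) := by
      rw [genOn, ← Finset.sum_neg_distrib]
      exact Finset.sum_congr rfl fun y _ => by ring
    rw [e, Finset.mul_sum, Finset.mul_sum]
    exact Finset.sum_congr rfl fun y _ => by ring
  have F7 : ∀ c : V → ℝ, (∑ x ∈ W, ∑ y ∈ W, π x * RW x y * c y)
      = ∑ x ∈ W, ∑ y ∈ W, π x * RW x y * c x := by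
    intro c
    rw [Finset.sum_comm]
    refine Finset.sum_congr rfl fun y hy => ?_
    rw [← Finset.sum_mul, F5 y hy, Finset.mul_sum, Finset.sum_mul]
  have Texp : ∀ a b : V → ℝ,
      (∑ x ∈ W, ∑ y ∈ W, π x * RW x y * ((a x - a y) * (b x - b y))) = B a b + B b a := by
    intro a b
    have h7 : (∑ x ∈ W, ∑ y ∈ W, π x * RW x y * (a y * b y))
        = ∑ x ∈ W, ∑ y ∈ W, π x * RW x y * (a x * b x) := F7 (fun v => a v * b v)
    rw [Bexp a b, Bexp b a]
    calc (∑ x ∈ W, ∑ y ∈ W, π x * RW x y * ((a x - a y) * (b x - b y)))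
        = ∑ x ∈ W, ∑ y ∈ W,
            ((π x * RW x y * (a x * (b x - b y)) + π x * RW x y * (b x * (a x - a y)))
              + (π x * RW x y * (a y * b y) - π x * RW x y * (a x * b x))) :=
          Finset.sum_congr rfl fun x _ => Finset.sum_congr rfl fun y _ => by ring
      _ = _ := by
          simp only [Finset.sum_add_distrib, Finset.sum_sub_distrib]
          rw [h7]
          ring
  -- the difference u = f - fW
  set u : V → ℝ := fun x => f x - fW x with hudef
  have hu0 : ∀ x ∈ V₀, u x = 0 := by
    intro x hx
    simp only [hudef]
    rw [hf0 x hx, hfW0 x hx, sub_self]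
  have huh : ∀ x ∈ W, x ∉ V₀ → genOn W RW u x = 0 := by
    intro x hxW hx
    simp only [hudef]
    rw [genOn_sub' W RW f fW x, F4 x hxW, hfh x hx, hfWh x hxW hx, sub_zero]
  have BufW : B u fW = 0 := by
    simp only [hBdef]
    refine Finset.sum_eq_zero fun x hx => ?_
    by_cases hx0 : x ∈ V₀
    · rw [hu0 x hx0]; ring
    · rw [hfWh x hx hx0]; ring
  have Buf : B u f = 0 := by
    simp only [hBdef]
    refine Finset.sum_eq_zero fun x hx => ?_
    by_cases hx0 : x ∈ V₀
    · rw [hu0 x hx0]; ring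
    · rw [F4 x hx, hfh x hx0]; ring
  have Buu : B u u = 0 := by
    simp only [hBdef]
    refine Finset.sum_eq_zero fun x hx => ?_
    by_cases hx0 : x ∈ V₀
    · rw [hu0 x hx0]; ring
    · rw [huh x hx hx0]; ring
  have Tuu : (∑ x ∈ W, ∑ y ∈ W, π x * RW x y * ((u x - u y) * (u x - u y))) = 0 := by
    rw [Texp u u, Buu]; ring
  have hnn : ∀ x ∈ W, ∀ y ∈ W, 0 ≤ π x * RW x y * ((u x - u y) * (u x - u y)) :=
    fun x hx y hy => mul_nonneg (mul_nonneg (hπ x).le (F6 x hx y hy)) (mul_self_nonneg _)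
  have hzero : ∀ x ∈ W, ∀ y ∈ W, π x * RW x y * ((u x - u y) * (u x - u y)) = 0 := by
    have houter := (Finset.sum_eq_zero_iff_of_nonneg
      (fun x hx => Finset.sum_nonneg fun y hy => hnn x hx y hy)).mp Tuu
    intro x hx y hy
    exact (Finset.sum_eq_zero_iff_of_nonneg (fun y hy => hnn x hx y hy)).mp (houter x hx) y hy
  have Tfu : (∑ x ∈ W, ∑ y ∈ W, π x * RW x y * ((f x - f y) * (u x - u y))) = 0 := by
    refine Finset.sum_eq_zero fun x hx => Finset.sum_eq_zero fun y hy => ?_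
    have h := hzero x hx y hy
    rcases mul_eq_zero.mp h with h1 | h1
    · rcases mul_eq_zero.mp h1 with h2 | h2
      · exact absurd h2 (hπ x).ne'
      · rw [h2]; ring
    · have h2 := mul_self_eq_zero.mp h1
      rw [h2]; ring
  have Bfu : B f u = 0 := by
    have h := Texp f u
    rw [Tfu] at h
    linarith [Buf]
  have Bsplit1 : B f u = B f f - B f fW := by
    simp only [hBdef]
    rw [← Finset.sum_sub_distrib]
    refine Finset.sum_congr rfl fun x hx => ?_
    simp only [hudef]
    rw [genOn_sub' W RW f fW x]
    ring
  have Bsplit2 : B u fW = B f fW - B fW fW := by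
    simp only [hBdef, hudef]
    rw [← Finset.sum_sub_distrib]
    exact Finset.sum_congr rfl fun x hx => by ring
  have core : B f f = B fW fW := by linarith [Bfu, Bsplit1, BufW, Bsplit2]
  have hπW : (0:ℝ) < ∑ z ∈ W, π z := Finset.sum_pos (fun z _ => hπ z) hWne
  have hL : (∑ x, π x * (f x * (-(gen R f x)))) = B f f := by
    have h1 : (∑ x, π x * (f x * (-(gen R f x))))
        = ∑ x ∈ V₀, π x * (f x * (-(gen R f x))) :=
      (Finset.sum_subset (Finset.subset_univ V₀) fun x _ hx => by
        rw [hfh x hx]; ring).symm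
    have h2 : B f f = ∑ x ∈ V₀, π x * (f x * (-(gen R f x))) := by
      simp only [hBdef]
      rw [← Finset.sum_subset hV₀W (fun x hxW hx => by rw [F4 x hxW, hfh x hx]; ring)]
      exact Finset.sum_congr rfl fun x hx => by rw [F4 x (hV₀W hx)]
    rw [h1]
    exact h2.symm
  have hRfinal : (∑ x ∈ W, π x) *
      (∑ x ∈ W, (π x / ∑ z ∈ W, π z) * (fW x * (-(genOn W RW fW x)))) = B fW fW := by
    simp only [hBdef]
    rw [Finset.mul_sum]
    refine Finset.sum_congr rfl fun x hx => ?_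
    have hS := hπW.ne'
    field_simp
  rw [hL, core]
  exact hRfinal.symm
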